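/- Let 𝔹 = (B, E, E^∨) be a DK-triple that is partially monotone, i.e. there is no Mono m : b' → b with [b'] > [b] in the partial order on isomorphism classes of objects of B (where [b'] ≤ [b] iff there exists a dual Epi b' → b, equivalently an Epi b → b'). Let C be a category, X : B → C a functor, and b ∈ B an object. Then X is a pointwise right Kan extension at b of its restriction to the full subcategory B_{<b} ⊆ B spanned by the objects strictly smaller than b, if and only if the cone with apex X(b) and legs X(e) : X(b) → X(b') over the diagram E_≠(b) → C (sending a non-invertible Epi e : b → b' to X(b') and a morphism of Epis under b to the image under X of the underlying morphism of B) is a limit cone in C. -/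

import Mathlib

open CategoryTheory CategoryTheory.Limits

universe v u v' u'

namespace DK

variable {B : Type u} [Category.{v} B]

/-- The singular arrows `Sing := E^∨_≠ ∘ B`: arrows of the form
(non-invertible dual Epi) ∘ (arbitrary arrow). -/
def Sing (Edual : MorphismProperty B) : MorphismProperty B :=
  fun X Y f => ∃ (Z : B) (g : X ⟶ Z) (h : Z ⟶ Y), Edual h ∧ ¬ IsIso h ∧ f = g ≫ h

/-- The regular arrows `Reg := B ∖ Sing`. -/
def Regular (Edual : MorphismProperty B) : MorphismProperty B :=
  fun _ _ f => ¬ Sing Edual f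

/-- The Monos `M := B ∖ (B ∘ E_≠)`: arrows which are not of the form
(arbitrary arrow) ∘ (non-invertible Epi). -/
def Mon (E : MorphismProperty B) : MorphismProperty B :=
  fun X Y f => ¬ ∃ (Z : B) (e : X ⟶ Z) (g : Z ⟶ Y), E e ∧ ¬ IsIso e ∧ f = e ≫ g

/-- Two arrows out of `b` are isomorphic as objects of the category `E(b)` of
(Epis) under `b`. -/
def EpiEquiv {b c c' : B} (e : b ⟶ c) (e' : b ⟶ c') : Prop :=
  ∃ u : c ≅ c', e ≫ u.hom = e'

/-- Two arrows into `b` are isomorphic as objects of the category `E^∨(b)` of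
(dual Epis) over `b`. -/
def DualEquiv {b c c' : B} (d : c ⟶ b) (d' : c' ⟶ b) : Prop :=
  ∃ u : c ≅ c', u.hom ≫ d' = d

/-- A (T1)-factorization of the arrow `f` as `e^∨ ∘ f̄ ∘ e` with `e ∈ E`,
`f̄ ∈ M ∩ Reg` and `e^∨ ∈ E^∨`. -/
structure Fact (E Edual : MorphismProperty B) {X Y : B} (f : X ⟶ Y) where
  Z : B
  W : B
  e : X ⟶ Z
  m : Z ⟶ W
  d : W ⟶ Y
  he : E e
  hm : Mon E m ∧ Regular Edual m
  hd : Edual d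
  fac : e ≫ m ≫ d = f

/-- Axiom (T2) at the object `b`: there are finitely many Epis out of `b` and
dual Epis into `b` up to isomorphism, and they can be enumerated by `Fin n`
(`n ≥ 1`) in such a way that the pairing matrix `⟨e_i ; e^∨_j⟩ = e_i ∘ e^∨_j`
has isomorphisms on the diagonal and non-isomorphisms below the diagonal. -/
def TriangularAt (E Edual : MorphismProperty B) (b : B) : Prop :=
  ∃ n : ℕ, 0 < n ∧ ∃ (cE : Fin n → B) (eR : ∀ i, b ⟶ cE i)
      (cD : Fin n → B) (dR : ∀ i, cD i ⟶ b),
    (∀ i, E (eR i)) ∧ (∀ i, Edual (dR i)) ∧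
    (∀ {c : B} (e : b ⟶ c), E e → ∃! i : Fin n, EpiEquiv e (eR i)) ∧
    (∀ {c : B} (d : c ⟶ b), Edual d → ∃! i : Fin n, DualEquiv d (dR i)) ∧
    (∀ i : Fin n, IsIso (dR i ≫ eR i)) ∧
    (∀ i j : Fin n, j < i → ¬ IsIso (dR j ≫ eR i))

/-- The diagonalizable version of axiom (T2) at `b`: the pairing matrix has
isomorphisms on the diagonal and non-isomorphisms in all off-diagonal spots. -/
def DiagonalAt (E Edual : MorphismProperty B) (b : B) : Prop :=
  ∃ n : ℕ, 0 < n ∧ ∃ (cE : Fin n → B) (eR : ∀ i, b ⟶ cE i)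
      (cD : Fin n → B) (dR : ∀ i, cD i ⟶ b),
    (∀ i, E (eR i)) ∧ (∀ i, Edual (dR i)) ∧
    (∀ {c : B} (e : b ⟶ c), E e → ∃! i : Fin n, EpiEquiv e (eR i)) ∧
    (∀ {c : B} (d : c ⟶ b), Edual d → ∃! i : Fin n, DualEquiv d (dR i)) ∧
    (∀ i : Fin n, IsIso (dR i ≫ eR i)) ∧
    (∀ i j : Fin n, i ≠ j → ¬ IsIso (dR j ≫ eR i))

/-- A DK-triple `𝔹 = (B, E, E^∨)`: a category `B` with two wide subcategories
`E` (the Epis) and `E^∨` (the dual Epis), each containing all isomorphisms,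
subject to the axioms (T1)–(T5). -/
structure DKTriple (B : Type u) [Category.{v} B] where
  /-- the Epis -/
  E : MorphismProperty B
  /-- the dual Epis -/
  Edual : MorphismProperty B
  E_iso : ∀ {X Y : B} (f : X ⟶ Y), IsIso f → E f
  Edual_iso : ∀ {X Y : B} (f : X ⟶ Y), IsIso f → Edual f
  E_comp : ∀ {X Y Z : B} {f : X ⟶ Y} {g : Y ⟶ Z}, E f → E g → E (f ≫ g)
  Edual_comp : ∀ {X Y Z : B} {f : X ⟶ Y} {g : Y ⟶ Z}, Edual f → Edual g → Edual (f ≫ g)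
  /-- (T1), existence part -/
  t1_exists : ∀ {X Y : B} (f : X ⟶ Y), Nonempty (Fact E Edual f)
  /-- (T1), uniqueness up to unique isomorphism -/
  t1_unique : ∀ {X Y : B} {f : X ⟶ Y} (F₁ F₂ : Fact E Edual f),
    ∃! p : (F₁.Z ≅ F₂.Z) × (F₁.W ≅ F₂.W),
      F₁.e ≫ p.1.hom = F₂.e ∧ p.1.hom ≫ F₂.m = F₁.m ≫ p.2.hom ∧
        p.2.hom ≫ F₂.d = F₁.d
  /-- (T2) -/
  t2 : ∀ b : B, TriangularAt E Edual b
  /-- (T3): `E^∨ ∘ E` is closed under composition -/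
  t3 : ∀ {X Y Z : B} {f : X ⟶ Y} {g : Y ⟶ Z},
    (∃ (W : B) (e : X ⟶ W) (d : W ⟶ Y), E e ∧ Edual d ∧ f = e ≫ d) →
    (∃ (W : B) (e : Y ⟶ W) (d : W ⟶ Z), E e ∧ Edual d ∧ g = e ≫ d) →
    ∃ (W : B) (e : X ⟶ W) (d : W ⟶ Z), E e ∧ Edual d ∧ f ≫ g = e ≫ d
  /-- (T4): `(M ∩ Reg) ∘ (M ∩ Reg) ⊆ M` -/
  t4 : ∀ {X Y Z : B} {f : X ⟶ Y} {g : Y ⟶ Z},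
    (Mon E f ∧ Regular Edual f) → (Mon E g ∧ Regular Edual g) → Mon E (f ≫ g)
  /-- (T5): `M ∘ Sing ⊆ Sing` -/
  t5 : ∀ {X Y Z : B} {f : X ⟶ Y} {g : Y ⟶ Z},
    Sing Edual f → Mon E g → Sing Edual (f ≫ g)

/-- A DK-triple is *reduced* if `B = E^∨ ∘ E`. -/
def DKTriple.Reduced (T : DKTriple B) : Prop :=
  ∀ {X Y : B} (f : X ⟶ Y),
    ∃ (W : B) (e : X ⟶ W) (d : W ⟶ Y), T.E e ∧ T.Edual d ∧ f = e ≫ d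

end DK

namespace DK

variable {B : Type u} [Category.{v} B] {C : Type u'} [Category.{v'} C]

/-- `[a] ≤ [b]`: there exists a dual Epi `a → b`. -/
def ObjLe (T : DKTriple B) (a b : B) : Prop := ∃ d : a ⟶ b, T.Edual d

/-- `[a] < [b]`: `[a] ≤ [b]` but not `[b] ≤ [a]`. -/
def ObjLt (T : DKTriple B) (a b : B) : Prop := ObjLe T a b ∧ ¬ ObjLe T b a

/-- A DK-triple is partially monotone if there is no Mono `m : b' → b` with
`[b'] > [b]`. -/
def PartiallyMonotone (T : DKTriple B) : Prop :=
  ∀ {b' b : B} (m : b' ⟶ b), Mon T.E m → ¬ ObjLt T b b'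

/-- The full subcategory `B_{<b}` of objects strictly smaller than `b`. -/
abbrev Blt (T : DKTriple B) (b : B) := ObjectProperty.FullSubcategory (fun b'' => ObjLt T b'' b)

/-- The comma category `(B_{<b})_{b/}` of arrows `b → b''` with `b'' ∈ B_{<b}`. -/
abbrev BltUnder (T : DKTriple B) (b : B) :=
  StructuredArrow b (ObjectProperty.ι (fun b'' => ObjLt T b'' b))

/-- The canonical diagram `(B_{<b})_{b/} → B → C` used to compute the pointwise
right Kan extension of `X|_{B_{<b}}` at `b`. -/
def kanDiagram (T : DKTriple B) (b : B) (X : B ⥤ C) : BltUnder T b ⥤ C :=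
  StructuredArrow.proj b (ObjectProperty.ι (fun b'' => ObjLt T b'' b)) ⋙
    ObjectProperty.ι (fun b'' => ObjLt T b'' b) ⋙ X

/-- The canonical cone with apex `X(b)` over `kanDiagram`; `X` is a pointwise
right Kan extension at `b` of its restriction to `B_{<b}` iff this cone is a
limit cone. -/
def kanCone (T : DKTriple B) (b : B) (X : B ⥤ C) : Limits.Cone (kanDiagram T b X) where
  pt := X.obj b
  π :=
    { app := fun f => X.map f.hom
      naturality := by
        intro f f' g
        dsimp [kanDiagram]
        exact (Category.id_comp _).trans
          ((congrArg X.map (StructuredArrow.w g)).symm.trans (X.map_comp _ _)) }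

/-- The category `E_≠(b)` of non-invertible Epis out of `b`. -/
structure EpiNe (T : DKTriple B) (b : B) where
  tgt : B
  e : b ⟶ tgt
  he : T.E e
  hni : ¬ IsIso e

instance (T : DKTriple B) (b : B) : Category.{v} (EpiNe T b) where
  Hom x y := {u : x.tgt ⟶ y.tgt // T.E u ∧ x.e ≫ u = y.e}
  id x := ⟨𝟙 x.tgt, T.E_iso _ inferInstance, Category.comp_id _⟩
  comp {x y z} u v := ⟨u.1 ≫ v.1, T.E_comp u.2.1 v.2.1, by
    rw [← Category.assoc, u.2.2, v.2.2]⟩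
  id_comp := by intros; apply Subtype.ext; simp
  comp_id := by intros; apply Subtype.ext; simp
  assoc := by intros; apply Subtype.ext; simp

/-- The diagram `E_≠(b) → C` sending a non-invertible Epi `e : b ↠ b'` to
`X(b')`. -/
def epiDiagram (T : DKTriple B) (b : B) (X : B ⥤ C) : EpiNe T b ⥤ C where
  obj x := X.obj x.tgt
  map u := X.map u.1
  map_id := by intro x; exact X.map_id _
  map_comp := by intro x y z u v; exact X.map_comp _ _

/-- The canonical cone with apex `X(b)` over `epiDiagram`, with legs `X(e)` for
every non-invertible Epi `e` out of `b`. -/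
def epiCone (T : DKTriple B) (b : B) (X : B ⥤ C) : Limits.Cone (epiDiagram T b X) where
  pt := X.obj b
  π :=
    { app := fun x => X.map x.e
      naturality := by
        intro x y u
        dsimp [epiDiagram]
        rw [Category.id_comp, ← X.map_comp, u.2.2] }

/-! ### Auxiliary lemmas -/

lemma objLe_trans (T : DKTriple B) {a b c : B} (h1 : ObjLe T a b) (h2 : ObjLe T b c) :
    ObjLe T a c := by
  obtain ⟨d1, h1⟩ := h1
  obtain ⟨d2, h2⟩ := h2
  exact ⟨d1 ≫ d2, T.Edual_comp h1 h2⟩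

/-- Every Epi `e : b → c` admits a section which is a dual Epi. -/
lemma epi_section (T : DKTriple B) {b c : B} (e : b ⟶ c) (he : T.E e) :
    ∃ d : c ⟶ b, T.Edual d ∧ d ≫ e = 𝟙 c := by
  obtain ⟨n, -, cE, eR, cD, dR, -, hdR, hEcls, -, hdiag, -⟩ := T.t2 b
  obtain ⟨i, ⟨u, hu⟩, -⟩ := hEcls e he
  haveI := hdiag i
  refine ⟨u.hom ≫ inv (dR i ≫ eR i) ≫ dR i,
    T.Edual_comp (T.Edual_iso u.hom inferInstance)
      (T.Edual_comp (T.Edual_iso (inv (dR i ≫ eR i)) inferInstance) (hdR i)), ?_⟩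
  have he' : e = eR i ≫ u.inv := by rw [← hu]; simp
  rw [he']
  simp only [Category.assoc]
  rw [← Category.assoc (dR i) (eR i), IsIso.inv_hom_id_assoc, Iso.hom_inv_id]

/-- Every dual Epi `d : a → b` admits a retraction which is an Epi. -/
lemma dual_retraction (T : DKTriple B) {a b : B} (d : a ⟶ b) (hd : T.Edual d) :
    ∃ r : b ⟶ a, T.E r ∧ d ≫ r = 𝟙 a := by
  obtain ⟨n, -, cE, eR, cD, dR, heR, -, -, hDcls, hdiag, -⟩ := T.t2 b
  obtain ⟨j, ⟨w, hw⟩, -⟩ := hDcls d hd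
  haveI := hdiag j
  refine ⟨eR j ≫ inv (dR j ≫ eR j) ≫ w.inv,
    T.E_comp (heR j) (T.E_iso _ inferInstance), ?_⟩
  rw [← hw]
  simp only [Category.assoc]
  rw [← Category.assoc (dR j) (eR j), IsIso.hom_inv_id_assoc, Iso.hom_inv_id]

/-- There cannot be both a non-invertible Epi `b → c` and a dual Epi `b → c`. -/
lemma false_of_epiNe_dual (T : DKTriple B) {b c : B} (e : b ⟶ c) (he : T.E e)
    (hne : ¬ IsIso e) (d : b ⟶ c) (hd : T.Edual d) : False := by
  obtain ⟨d', hd', hd'e⟩ := epi_section T e he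
  obtain ⟨r, hr, hdr⟩ := dual_retraction T d hd
  set ε := e ≫ r with hε
  have hεE : T.E ε := T.E_comp he hr
  set δ := d ≫ d' with hδ
  have hδε : δ ≫ ε = 𝟙 b := by
    rw [hδ, hε]
    rw [Category.assoc, ← Category.assoc d' e r, hd'e, Category.id_comp, hdr]
  have hεne : ¬ IsIso ε := by
    intro h
    apply hne
    have h1 : e ≫ r ≫ inv ε = 𝟙 b := by
      rw [← Category.assoc, ← hε]; exact IsIso.hom_inv_id ε
    have hdeq : d' = r ≫ inv ε := by
      calc d' = d' ≫ (e ≫ r ≫ inv ε) := by rw [h1, Category.comp_id]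
        _ = (d' ≫ e) ≫ (r ≫ inv ε) := by simp
        _ = r ≫ inv ε := by rw [hd'e, Category.id_comp]
    exact ⟨⟨r ≫ inv ε, h1, by rw [← hdeq]; exact hd'e⟩⟩
  -- powers of ε and δ
  let εp : ℕ → (b ⟶ b) := fun n => Nat.rec (𝟙 b) (fun _ ih => ε ≫ ih) n
  let δp : ℕ → (b ⟶ b) := fun n => Nat.rec (𝟙 b) (fun _ ih => ih ≫ δ) n
  have hεp0 : εp 0 = 𝟙 b := rfl
  have hδp0 : δp 0 = 𝟙 b := rfl
  have hεps : ∀ m, εp (m + 1) = ε ≫ εp m := fun _ => rfl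
  have hδps : ∀ m, δp (m + 1) = δp m ≫ δ := fun _ => rfl
  have hsplit : ∀ m, δp m ≫ εp m = 𝟙 b := by
    intro m
    induction m with
    | zero => rw [hεp0, hδp0, Category.id_comp]
    | succ m ih =>
        rw [hεps, hδps]
        calc (δp m ≫ δ) ≫ ε ≫ εp m = δp m ≫ (δ ≫ ε) ≫ εp m := by simp
          _ = δp m ≫ εp m := by rw [hδε, Category.id_comp]
          _ = 𝟙 b := ih
  have hεpE : ∀ m, T.E (εp m) := by
    intro m
    induction m with
    | zero => rw [hεp0]; exact T.E_iso _ inferInstance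
    | succ m ih => rw [hεps]; exact T.E_comp hεE ih
  have hadd : ∀ m k, εp (m + k) = εp m ≫ εp k := by
    intro m
    induction m with
    | zero => intro k; rw [Nat.zero_add, hεp0, Category.id_comp]
    | succ m ih =>
        intro k
        have : m + 1 + k = (m + k) + 1 := by omega
        rw [this, hεps, hεps, ih k]
        simp only [Category.assoc]
  have hεpne : ∀ m, ¬ IsIso (εp (m + 1)) := by
    intro m h
    rw [hεps] at h
    obtain ⟨w, hw1, -⟩ := h.out
    have h1 : ε ≫ εp m ≫ w = 𝟙 b := by
      rw [← Category.assoc]; exact hw1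
    have hdeq : δ = εp m ≫ w := by
      calc δ = δ ≫ (ε ≫ εp m ≫ w) := by rw [h1, Category.comp_id]
        _ = (δ ≫ ε) ≫ (εp m ≫ w) := by simp
        _ = εp m ≫ w := by rw [hδε, Category.id_comp]
    have hii : IsIso ε := ⟨εp m ≫ w, h1, by rw [← hdeq]; exact hδε⟩
    exact hεne hii
  -- the classes of the powers are pairwise distinct, contradicting finiteness
  obtain ⟨n, -, cE, eR, cD, dR, -, -, hEcls, -, -, -⟩ := T.t2 b
  let cls : ℕ → Fin n := fun p => ((hEcls (εp p) (hεpE p)).exists).choose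
  have hcls : ∀ p, EpiEquiv (εp p) (eR (cls p)) :=
    fun p => ((hEcls (εp p) (hεpE p)).exists).choose_spec
  have hinj : ∀ p q, p < q → cls p ≠ cls q := by
    intro p q hpq hEq
    have hp' := hcls p
    have hq' := hcls q
    rw [← hEq] at hq'
    obtain ⟨u, hu⟩ := hp'
    obtain ⟨v, hv⟩ := hq'
    have hu2 : εp p ≫ u.hom = εp q ≫ v.hom := by rw [hu, hv]
    obtain ⟨s, hs⟩ : ∃ s, q = p + (s + 1) := ⟨q - p - 1, by omega⟩
    have h2 : εp p = εp q ≫ v.hom ≫ u.inv := by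
      rw [← Category.assoc, ← hu2]; simp
    have h3 : δp p ≫ εp q = εp (s + 1) := by
      rw [hs, hadd, ← Category.assoc, hsplit p, Category.id_comp]
    have h4 : εp (s + 1) ≫ v.hom ≫ u.inv = 𝟙 b := by
      rw [← h3, Category.assoc, ← h2, hsplit p]
    apply hεpne s
    have h5 : εp (s + 1) = inv (v.hom ≫ u.inv) := by
      rw [← Category.comp_id (εp (s + 1)), ← IsIso.hom_inv_id (v.hom ≫ u.inv),
        ← Category.assoc, h4, Category.id_comp]
    rw [h5]
    infer_instance
  -- pigeonhole
  have hinj' : Function.Injective (fun p : Fin (n + 1) => cls p.val) := by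
    intro p q h
    by_contra hne'
    rcases lt_or_gt_of_ne (fun h' : p.val = q.val => hne' (Fin.ext h')) with h' | h'
    · exact hinj _ _ h' h
    · exact hinj _ _ h' h.symm
  have := Fintype.card_le_of_injective _ hinj'
  rw [Fintype.card_fin, Fintype.card_fin] at this
  omega

/-- The target of a non-invertible Epi out of `b` is strictly smaller than `b`. -/
lemma objLt_of_epiNe (T : DKTriple B) {b c : B} (e : b ⟶ c) (he : T.E e)
    (hne : ¬ IsIso e) : ObjLt T c b := by
  obtain ⟨d, hd, -⟩ := epi_section T e he
  exact ⟨⟨d, hd⟩, fun h => h.elim fun d' hd' => false_of_epiNe_dual T e he hne d' hd'⟩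

/-- For a partially monotone DK-triple, the Epi part of any (T1)-factorization
of an arrow into an object strictly below its source is non-invertible. -/
lemma fact_e_not_iso (T : DKTriple B) (hpm : PartiallyMonotone T) {b b'' : B}
    (h : ObjLt T b'' b) {f : b ⟶ b''} (F : Fact T.E T.Edual f) : ¬ IsIso F.e := by
  intro hiso
  apply hpm F.m F.hm.1
  constructor
  · exact objLe_trans T ⟨F.d, F.hd⟩ (objLe_trans T h.1 ⟨F.e, T.Edual_iso F.e hiso⟩)
  · rintro ⟨d, hd⟩
    exact h.2 (objLe_trans T (objLe_trans T ⟨F.e, T.Edual_iso F.e hiso⟩ ⟨d, hd⟩)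
      ⟨F.d, F.hd⟩)

/-- The canonical functor `E_≠(b) → (B_{<b})_{b/}` sending a non-invertible
Epi `e : b → c` to the structured arrow `e : b → c`. -/
def toBlt (T : DKTriple B) (b : B) : EpiNe T b ⥤ BltUnder T b where
  obj x := StructuredArrow.mk
    (Y := (⟨x.tgt, objLt_of_epiNe T x.e x.he x.hni⟩ : Blt T b)) x.e
  map {x y} v := StructuredArrow.homMk (ObjectProperty.homMk v.1) (by simpa using v.2.2)
  map_id x := by apply StructuredArrow.hom_ext; rfl
  map_comp u v := by apply StructuredArrow.hom_ext; rfl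

/-- For a partially monotone DK-triple, the functor `E_≠(b) → (B_{<b})_{b/}`
is initial. -/
lemma toBlt_initial (T : DKTriple B) (hpm : PartiallyMonotone T) (b : B) :
    (toBlt T b).Initial := by
  constructor
  intro d
  obtain ⟨F₀⟩ := T.t1_exists d.hom
  have hF₀ : ¬ IsIso F₀.e := fact_e_not_iso T hpm d.right.property F₀
  let X₀ : EpiNe T b := ⟨F₀.Z, F₀.e, F₀.he, hF₀⟩
  let x₀ : CostructuredArrow (toBlt T b) d :=
    CostructuredArrow.mk (Y := X₀)
      (StructuredArrow.homMk
        (show ((toBlt T b).obj X₀).right ⟶ d.right from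
          ObjectProperty.homMk (F₀.m ≫ F₀.d : F₀.Z ⟶ d.right.obj))
        (show F₀.e ≫ F₀.m ≫ F₀.d = d.hom from F₀.fac))
  have key : ∀ x : CostructuredArrow (toBlt T b) d, Zigzag x x₀ := by
    intro x
    obtain ⟨G⟩ := T.t1_exists (x.hom.right.hom : x.left.tgt ⟶ d.right.obj)
    have hw : x.left.e ≫ x.hom.right.hom = d.hom := by
      simpa [toBlt] using StructuredArrow.w x.hom
    let F' : Fact T.E T.Edual d.hom :=
      ⟨G.Z, G.W, x.left.e ≫ G.e, G.m, G.d, T.E_comp x.left.he G.he, G.hm, G.hd, by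
        exact (Category.assoc _ _ _).trans ((congrArg (x.left.e ≫ ·) G.fac).trans hw)⟩
    obtain ⟨p, hp, -⟩ := T.t1_unique F' F₀
    have hF' : ¬ IsIso (x.left.e ≫ G.e) := by
      intro h
      apply hF₀
      haveI := h
      rw [show F₀.e = (x.left.e ≫ G.e) ≫ p.1.hom from hp.1.symm]
      infer_instance
    let X₁ : EpiNe T b := ⟨G.Z, x.left.e ≫ G.e, T.E_comp x.left.he G.he, hF'⟩
    let x₁ : CostructuredArrow (toBlt T b) d :=
      CostructuredArrow.mk (Y := X₁)
        (StructuredArrow.homMk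
          (show ((toBlt T b).obj X₁).right ⟶ d.right from
            ObjectProperty.homMk (G.m ≫ G.d : G.Z ⟶ d.right.obj))
          (show (x.left.e ≫ G.e) ≫ G.m ≫ G.d = d.hom by
            exact (Category.assoc _ _ _).trans ((congrArg (x.left.e ≫ ·) G.fac).trans hw)))
    have m₁ : x ⟶ x₁ := by
      refine CostructuredArrow.homMk (⟨G.e, G.he, rfl⟩ : x.left ⟶ X₁) ?_
      apply StructuredArrow.hom_ext
      apply ObjectProperty.hom_ext
      simpa [toBlt, x₁] using G.fac
    have m₂ : x₁ ⟶ x₀ := by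
      refine CostructuredArrow.homMk
        (⟨p.1.hom, T.E_iso _ inferInstance, hp.1⟩ : X₁ ⟶ X₀) ?_
      apply StructuredArrow.hom_ext
      apply ObjectProperty.hom_ext
      show p.1.hom ≫ (F₀.m ≫ F₀.d) = G.m ≫ G.d
      rw [← Category.assoc, hp.2.1, Category.assoc, hp.2.2]
    exact (Relation.ReflTransGen.single (Zag.of_hom m₁)).tail (Zag.of_hom m₂)
  haveI : Nonempty (CostructuredArrow (toBlt T b) d) := ⟨x₀⟩
  exact zigzag_isConnected fun x y => (key x).trans (Zigzag.symm (key y))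

/-- Proposition 7.0.7 (1): for a partially monotone DK-triple, a diagram
`X : B → C` is a pointwise right Kan extension at `b` of its restriction to
`B_{<b}` if and only if the canonical cone `X(b) → (E_≠(b) → C)` over the
non-invertible Epis out of `b` is a limit cone. -/
theorem pointwise_rke_iff_epi_cone_isLimit (T : DKTriple B)
    (hpm : PartiallyMonotone T) (X : B ⥤ C) (b : B) :
    Nonempty (Limits.IsLimit (kanCone T b X)) ↔
      Nonempty (Limits.IsLimit (epiCone T b X)) := by
  haveI : (toBlt T b).Initial := toBlt_initial T hpm b
  let i : toBlt T b ⋙ kanDiagram T b X ≅ epiDiagram T b X :=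
    NatIso.ofComponents (fun x => Iso.refl _)
      (by intro x y v; simp [toBlt, kanDiagram, epiDiagram]; exact (Category.comp_id _).trans (Category.id_comp _).symm)
  have equiv1 := Functor.Initial.isLimitWhiskerEquiv (toBlt T b) (kanCone T b X)
  have equiv2 : IsLimit ((kanCone T b X).whisker (toBlt T b)) ≃
      IsLimit (epiCone T b X) :=
    IsLimit.equivOfNatIsoOfIso i _ _
      (Cones.ext (Iso.refl _) (by intro x; simp [toBlt, kanCone, epiCone, i]; exact (Category.comp_id _).trans (Category.id_comp _).symm))
  exact ⟨fun ⟨h⟩ => ⟨equiv2 (equiv1.symm h)⟩, fun ⟨h⟩ => ⟨equiv1 (equiv2.symm h)⟩⟩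

end DK
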